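/- For a, b > -1 with a + b > -1 and nonnegative integers i, j, the bimoment I_{ij} = ∫∫_{(0,∞)²} x^i y^j x^a y^b e^{-(x+y)}/(x+y) dx dy satisfies I_{ij} = Γ(a+i+1) · M_{ij} · Γ(b+j+1), where M_{ij} = ∫₀¹ x^{i+j+a+b} dx = 1/(i+j+a+b+1) is the Hankel moment matrix of the weight x^{a+b} on [0,1]. -/

import Mathlib

open MeasureTheory Set intervalIntegral

namespace BimomentAux

lemma intOn_rpow_exp {s c : ℝ} (hs : 0 < s) (hc : 0 < c) :
    IntegrableOn (fun x : ℝ => x ^ (s - 1) * Real.exp (-(c * x))) (Ioi 0) := by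
  have h := integrableOn_rpow_mul_exp_neg_mul_rpow (p := 1) (s := s - 1) (b := c)
    (by linarith) one_pos hc
  refine h.congr_fun (fun x hx => ?_) measurableSet_Ioi
  simp only [Real.rpow_one, neg_mul]

lemma int_rpow_exp {s c : ℝ} (hs : 0 < s) (hc : 0 < c) :
    ∫ x in Ioi (0:ℝ), x ^ (s - 1) * Real.exp (-(c * x)) = (1 / c) ^ s * Real.Gamma s :=
  Real.integral_rpow_mul_exp_neg_mul_Ioi hs hc

lemma intOn_exp {c : ℝ} (hc : 0 < c) :
    IntegrableOn (fun t : ℝ => Real.exp (-(c * t))) (Ioi 0) := by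
  have h := intOn_rpow_exp one_pos hc
  simpa using h

lemma int_exp {c : ℝ} (hc : 0 < c) :
    ∫ t in Ioi (0:ℝ), Real.exp (-(c * t)) = 1 / c := by
  have h := int_rpow_exp one_pos hc
  simpa [Real.Gamma_one] using h

lemma preim : (fun t : ℝ => 1 + t) ⁻¹' (Ioi 1) = Ioi (0:ℝ) := by
  ext t; simp

lemma intOn_one_add_rpow {γ : ℝ} (hγ : 1 < γ) :
    IntegrableOn (fun t : ℝ => (1 + t) ^ (-γ)) (Ioi 0) := by
  have h := integrableOn_Ioi_rpow_of_lt (a := -γ) (by linarith) (c := (1:ℝ)) one_pos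
  have h2 := (MeasurePreserving.integrableOn_comp_preimage
      (measurePreserving_add_left volume 1) (measurableEmbedding_addLeft 1)).2 h
  simpa [Function.comp_def, preim] using h2

lemma int_one_add_rpow {γ : ℝ} (hγ : 1 < γ) :
    ∫ t in Ioi (0:ℝ), (1 + t) ^ (-γ) = 1 / (γ - 1) := by
  have h := (measurePreserving_add_left volume (1:ℝ)).setIntegral_preimage_emb
      (measurableEmbedding_addLeft 1) (fun t => t ^ (-γ)) (Ioi 1)
  rw [preim] at h
  rw [h, integral_Ioi_rpow_of_lt (by linarith) one_pos, Real.one_rpow,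
    div_eq_div_iff (by linarith) (by linarith : γ - 1 ≠ 0)]
  ring

lemma core {α β : ℝ} (hα : 0 < α) (hβ : 0 < β) (hαβ : 1 < α + β) :
    (∫ x in Ioi (0:ℝ), ∫ y in Ioi (0:ℝ),
        x ^ (α - 1) * y ^ (β - 1) * Real.exp (-(x + y)) / (x + y))
      = Real.Gamma α * (1 / (α + β - 1)) * Real.Gamma β := by
  have hΓα : 0 < Real.Gamma α := Real.Gamma_pos_of_pos hα
  have hΓβ : 0 < Real.Gamma β := Real.Gamma_pos_of_pos hβ
  set f : ℝ → ℝ → ℝ := fun x y =>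
    x ^ (α - 1) * y ^ (β - 1) * Real.exp (-(x + y)) / (x + y) with hfdef
  set g : ℝ → ℝ → ℝ → ℝ := fun t x y =>
    (x ^ (α - 1) * Real.exp (-((1 + t) * x))) *
      (y ^ (β - 1) * Real.exp (-((1 + t) * y))) with hgdef
  set R : ℝ := Real.Gamma α * (1 / (α + β - 1)) * Real.Gamma β with hRdef
  have hRpos : 0 ≤ R := by
    have : 0 < α + β - 1 := by linarith
    positivity
  -- measurability
  have hfm : Measurable (fun p : ℝ × ℝ => f p.1 p.2) := by
    apply Measurable.div
    · fun_prop
    · fun_prop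
  have hgm : Measurable (fun p : ℝ × ℝ × ℝ => ENNReal.ofReal (g p.1 p.2.1 p.2.2)) := by
    fun_prop
  -- pointwise Laplace representation
  have key : ∀ x ∈ Ioi (0:ℝ), ∀ y ∈ Ioi (0:ℝ),
      ENNReal.ofReal (f x y) = ∫⁻ t in Ioi 0, ENNReal.ofReal (g t x y) := by
    intro x hx y hy
    have hx0 : (0:ℝ) < x := hx
    have hy0 : (0:ℝ) < y := hy
    have hxy : 0 < x + y := by linarith
    have hgt : ∀ t : ℝ, g t x y
        = (x ^ (α - 1) * y ^ (β - 1) * Real.exp (-(x + y))) * Real.exp (-((x + y) * t)) := by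
      intro t
      have hE : Real.exp (-((1 + t) * x)) * Real.exp (-((1 + t) * y))
          = Real.exp (-(x + y)) * Real.exp (-((x + y) * t)) := by
        rw [← Real.exp_add, ← Real.exp_add]
        congr 1
        ring
      calc g t x y
          = x ^ (α - 1) * y ^ (β - 1)
              * (Real.exp (-((1 + t) * x)) * Real.exp (-((1 + t) * y))) := by
            simp only [hgdef]; ring
        _ = _ := by rw [hE]; ring
    have hint : IntegrableOn (fun t => g t x y) (Ioi 0) :=
      IntegrableOn.congr_fun
        ((intOn_exp hxy).const_mul (x ^ (α - 1) * y ^ (β - 1) * Real.exp (-(x + y))))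
        (fun t _ => (hgt t).symm) measurableSet_Ioi
    have hval : ∫ t in Ioi 0, g t x y = f x y := by
      rw [setIntegral_congr_fun measurableSet_Ioi (fun t _ => hgt t),
        MeasureTheory.integral_const_mul, int_exp hxy]
      simp only [hfdef]
      rw [mul_one_div]
    rw [← hval, ofReal_integral_eq_lintegral_ofReal hint ?_]
    exact (ae_restrict_iff' measurableSet_Ioi).2 (ae_of_all _ fun t ht => by
      have ht0 : (0:ℝ) < t := ht
      simp only [hgdef]
      positivity)
  -- the main lintegral computation
  have star : (∫⁻ x in Ioi (0:ℝ), ∫⁻ y in Ioi (0:ℝ), ENNReal.ofReal (f x y))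
      = ENNReal.ofReal R := by
    have step1 : (∫⁻ x in Ioi (0:ℝ), ∫⁻ y in Ioi (0:ℝ), ENNReal.ofReal (f x y))
        = ∫⁻ t in Ioi (0:ℝ), ∫⁻ x in Ioi (0:ℝ), ∫⁻ y in Ioi (0:ℝ),
            ENNReal.ofReal (g t x y) := by
      have e1 : (∫⁻ x in Ioi (0:ℝ), ∫⁻ y in Ioi (0:ℝ), ENNReal.ofReal (f x y))
          = ∫⁻ x in Ioi (0:ℝ), ∫⁻ t in Ioi (0:ℝ), ∫⁻ y in Ioi (0:ℝ),
              ENNReal.ofReal (g t x y) := by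
        refine setLIntegral_congr_fun measurableSet_Ioi (fun x hx => ?_)
        have e2 : (∫⁻ y in Ioi (0:ℝ), ENNReal.ofReal (f x y))
            = ∫⁻ y in Ioi (0:ℝ), ∫⁻ t in Ioi (0:ℝ), ENNReal.ofReal (g t x y) :=
          setLIntegral_congr_fun measurableSet_Ioi
            (fun y hy => key x hx y hy)
        rw [e2]
        exact lintegral_lintegral_swap
          ((hgm.comp (by fun_prop :
            Measurable fun q : ℝ × ℝ => (q.2, x, q.1))).aemeasurable)
      rw [e1]
      exact lintegral_lintegral_swap
        ((Measurable.lintegral_prod_right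
          (f := fun (p : ℝ × ℝ) y => ENNReal.ofReal (g p.2 p.1 y))
          (hgm.comp (by fun_prop :
            Measurable fun q : (ℝ × ℝ) × ℝ => (q.1.2, q.1.1, q.2)))).aemeasurable)
    have step2 : ∀ t ∈ Ioi (0:ℝ),
        (∫⁻ x in Ioi (0:ℝ), ∫⁻ y in Ioi (0:ℝ), ENNReal.ofReal (g t x y))
          = ENNReal.ofReal (Real.Gamma α * Real.Gamma β * (1 + t) ^ (-(α + β))) := by
      intro t ht
      have ht0 : (0:ℝ) < t := ht
      have h1t : (0:ℝ) < 1 + t := by linarith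
      have hy : (∫⁻ y in Ioi (0:ℝ), ENNReal.ofReal (y ^ (β - 1) * Real.exp (-((1 + t) * y))))
          = ENNReal.ofReal ((1 / (1 + t)) ^ β * Real.Gamma β) := by
        rw [← int_rpow_exp hβ h1t,
          ofReal_integral_eq_lintegral_ofReal (intOn_rpow_exp hβ h1t) ?_]
        exact (ae_restrict_iff' measurableSet_Ioi).2 (ae_of_all _ fun y hy => by
          have : (0:ℝ) < y := hy
          positivity)
      have inner : ∀ x ∈ Ioi (0:ℝ),
          (∫⁻ y in Ioi (0:ℝ), ENNReal.ofReal (g t x y))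
            = ENNReal.ofReal (x ^ (α - 1) * Real.exp (-((1 + t) * x)))
              * ENNReal.ofReal ((1 / (1 + t)) ^ β * Real.Gamma β) := by
        intro x hx
        have hx0 : (0:ℝ) < x := hx
        have hxp : 0 ≤ x ^ (α - 1) * Real.exp (-((1 + t) * x)) := by positivity
        calc (∫⁻ y in Ioi (0:ℝ), ENNReal.ofReal (g t x y))
            = ∫⁻ y in Ioi (0:ℝ), ENNReal.ofReal (x ^ (α - 1) * Real.exp (-((1 + t) * x)))
                * ENNReal.ofReal (y ^ (β - 1) * Real.exp (-((1 + t) * y))) := by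
              refine lintegral_congr fun y => ?_
              rw [← ENNReal.ofReal_mul hxp]
          _ = ENNReal.ofReal (x ^ (α - 1) * Real.exp (-((1 + t) * x)))
                * ∫⁻ y in Ioi (0:ℝ), ENNReal.ofReal (y ^ (β - 1) * Real.exp (-((1 + t) * y))) :=
              lintegral_const_mul' _ _ ENNReal.ofReal_ne_top
          _ = _ := by rw [hy]
      rw [setLIntegral_congr_fun measurableSet_Ioi inner,
        lintegral_mul_const' _ _ ENNReal.ofReal_ne_top]
      have hxint : (∫⁻ x in Ioi (0:ℝ), ENNReal.ofReal (x ^ (α - 1) * Real.exp (-((1 + t) * x))))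
          = ENNReal.ofReal ((1 / (1 + t)) ^ α * Real.Gamma α) := by
        rw [← int_rpow_exp hα h1t,
          ofReal_integral_eq_lintegral_ofReal (intOn_rpow_exp hα h1t) ?_]
        exact (ae_restrict_iff' measurableSet_Ioi).2 (ae_of_all _ fun x hx => by
          have : (0:ℝ) < x := hx
          positivity)
      rw [hxint, ← ENNReal.ofReal_mul (by positivity)]
      congr 1
      rw [one_div, Real.inv_rpow h1t.le, Real.inv_rpow h1t.le,
        show -(α + β) = -α + -β by ring, Real.rpow_add h1t,
        Real.rpow_neg h1t.le, Real.rpow_neg h1t.le]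
      ring
    rw [step1, setLIntegral_congr_fun measurableSet_Ioi step2,
      ← ofReal_integral_eq_lintegral_ofReal
        (((intOn_one_add_rpow hαβ).const_mul (Real.Gamma α * Real.Gamma β)))
        ((ae_restrict_iff' measurableSet_Ioi).2 (ae_of_all _ fun t ht => by
          have ht0 : (0:ℝ) < t := ht
          have : (0:ℝ) < 1 + t := by linarith
          positivity)),
      MeasureTheory.integral_const_mul, int_one_add_rpow hαβ, hRdef]
    congr 1
    ring
  -- convert Bochner integrals to lintegrals
  have hL : Measurable fun x => ∫⁻ y in Ioi (0:ℝ), ENNReal.ofReal (f x y) :=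
    Measurable.lintegral_prod_right (ENNReal.measurable_ofReal.comp hfm)
  have h1 : (∫ x in Ioi (0:ℝ), ∫ y in Ioi (0:ℝ), f x y)
      = ∫ x in Ioi (0:ℝ), (∫⁻ y in Ioi (0:ℝ), ENNReal.ofReal (f x y)).toReal := by
    refine setIntegral_congr_fun measurableSet_Ioi (fun x hx => ?_)
    have hx0 : (0:ℝ) < x := hx
    refine integral_eq_lintegral_of_nonneg_ae ?_ ?_
    · exact (ae_restrict_iff' measurableSet_Ioi).2 (ae_of_all _ fun y hy => by
        have hy0 : (0:ℝ) < y := hy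
        have hxy : (0:ℝ) < x + y := by linarith
        simp only [hfdef]
        positivity)
    · exact (hfm.comp measurable_prodMk_left).aestronglyMeasurable
  have h2 : ∀ᵐ x ∂(volume.restrict (Ioi (0:ℝ))),
      (∫⁻ y in Ioi (0:ℝ), ENNReal.ofReal (f x y)) ≠ ⊤ := by
    have := ae_lt_top hL (by rw [star]; exact ENNReal.ofReal_ne_top)
    exact this.mono fun x hx => hx.ne
  calc (∫ x in Ioi (0:ℝ), ∫ y in Ioi (0:ℝ), f x y)
      = ∫ x in Ioi (0:ℝ), (∫⁻ y in Ioi (0:ℝ), ENNReal.ofReal (f x y)).toReal := h1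
    _ = (∫⁻ x in Ioi (0:ℝ), ENNReal.ofReal
          ((∫⁻ y in Ioi (0:ℝ), ENNReal.ofReal (f x y)).toReal)).toReal :=
        integral_eq_lintegral_of_nonneg_ae (ae_of_all _ fun x => ENNReal.toReal_nonneg)
          hL.ennreal_toReal.aestronglyMeasurable
    _ = (∫⁻ x in Ioi (0:ℝ), ∫⁻ y in Ioi (0:ℝ), ENNReal.ofReal (f x y)).toReal := by
        congr 1
        exact lintegral_congr_ae (h2.mono fun x hx => ENNReal.ofReal_toReal hx)
    _ = R := by rw [star, ENNReal.toReal_ofReal hRpos]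

end BimomentAux

theorem bimoment_factorization (a b : ℝ) (ha : -1 < a) (hb : -1 < b)
    (hab : -1 < a + b) (i j : ℕ) :
    (∫ x in (0:ℝ)..1, x ^ ((i : ℝ) + (j : ℝ) + a + b))
      = 1 / ((i : ℝ) + (j : ℝ) + a + b + 1)
    ∧ (∫ x in Ioi (0:ℝ), ∫ y in Ioi (0:ℝ),
        x ^ i * y ^ j * x ^ a * y ^ b * Real.exp (-(x + y)) / (x + y))
      = Real.Gamma (a + i + 1) *
          (∫ x in (0:ℝ)..1, x ^ ((i : ℝ) + (j : ℝ) + a + b)) *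
          Real.Gamma (b + j + 1) := by
  have hi : (0:ℝ) ≤ (i:ℝ) := Nat.cast_nonneg i
  have hj : (0:ℝ) ≤ (j:ℝ) := Nat.cast_nonneg j
  have hr : (-1:ℝ) < (i : ℝ) + (j : ℝ) + a + b := by linarith
  have hM : (∫ x in (0:ℝ)..1, x ^ ((i : ℝ) + (j : ℝ) + a + b))
      = 1 / ((i : ℝ) + (j : ℝ) + a + b + 1) := by
    rw [integral_rpow (Or.inl hr), Real.one_rpow,
      Real.zero_rpow (by linarith), sub_zero]
  refine ⟨hM, ?_⟩
  rw [hM]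
  have hcore := BimomentAux.core (α := a + (i:ℝ) + 1) (β := b + (j:ℝ) + 1)
    (by linarith) (by linarith) (by linarith)
  have hcongr : (∫ x in Ioi (0:ℝ), ∫ y in Ioi (0:ℝ),
        x ^ i * y ^ j * x ^ a * y ^ b * Real.exp (-(x + y)) / (x + y))
      = ∫ x in Ioi (0:ℝ), ∫ y in Ioi (0:ℝ),
          x ^ (a + (i:ℝ) + 1 - 1) * y ^ (b + (j:ℝ) + 1 - 1)
            * Real.exp (-(x + y)) / (x + y) := by
    refine setIntegral_congr_fun measurableSet_Ioi fun x hx => ?_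
    refine setIntegral_congr_fun measurableSet_Ioi fun y hy => ?_
    have hx0 : (0:ℝ) < x := hx
    have hy0 : (0:ℝ) < y := hy
    rw [show a + (i:ℝ) + 1 - 1 = (i:ℝ) + a by ring,
      show b + (j:ℝ) + 1 - 1 = (j:ℝ) + b by ring,
      Real.rpow_add hx0, Real.rpow_add hy0, Real.rpow_natCast, Real.rpow_natCast]
    ring
  rw [hcongr, hcore,
    show a + (i:ℝ) + 1 + (b + (j:ℝ) + 1) - 1 = (i : ℝ) + (j : ℝ) + a + b + 1 by ring]
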